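/- arXiv:1806.11104 — 4 statements merged into one kernel-verified Lean document; each statement's English description precedes it below -/
import Mathlib

section
/- Let P be a nonzero polynomial with real coefficients whose leading coefficient is positive, and let u₀ ∈ ℝ be a root of P of multiplicity j. Let N be the sum of the multiplicities of all real roots of P that are strictly greater than u₀. Then the sign of P^{(j)}(u₀) equals (−1)^N; that is, P^{(j)}(u₀) > 0 if N is even and P^{(j)}(u₀) < 0 if N is odd. -/
open Polynomial

/-- Sign of a nonvanishing real polynomial with positive leading coefficient at a point `x`
is `(-1)^(number of roots above x, with multiplicity)`. -/
lemma sign_eval_aux (n : ℕ) : ∀ (Q : Polynomial ℝ), Q ≠ 0 → 0 < Q.leadingCoeff →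
    Q.eval x ≠ 0 → (Q.roots.filter (fun r => x < r)).card = n →
    (Even n → 0 < Q.eval x) ∧ (Odd n → Q.eval x < 0) := by
  induction n with
  | zero =>
    intro Q hQ hlc hx hcard
    refine ⟨fun _ => ?_, fun h => by simp at h⟩
    by_contra hneg
    push_neg at hneg
    have hneg' : Q.eval x < 0 := lt_of_le_of_ne hneg hx
    -- Q tends to +∞, so there is y > x with Q y > 0; IVT gives a root in (x, y).
    have hdeg : 0 < Q.degree := by
      rcases lt_or_ge 0 Q.degree with h | h
      · exact h
      · exfalso
        have : Q = Polynomial.C (Q.coeff 0) := Polynomial.eq_C_of_degree_le_zero h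
        rw [this] at hneg'
        simp only [Polynomial.eval_C] at hneg'
        have : Q.leadingCoeff = Q.coeff 0 := by rw [this]; simp
        linarith [this ▸ hlc]
    have htop := Polynomial.tendsto_atTop_of_leadingCoeff_nonneg Q hdeg hlc.le
    obtain ⟨y, hy⟩ := ((htop.eventually_gt_atTop 0).and (Filter.eventually_gt_atTop x)).exists
    obtain ⟨z, hz, hzr⟩ := intermediate_value_Ioo (le_of_lt hy.2)
      (Q.continuousOn (s := Set.Icc x y)) (by constructor <;> simp [hneg', hy.1] : (0:ℝ) ∈ Set.Ioo (Q.eval x) (Q.eval y))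
    have : z ∈ Q.roots.filter (fun r => x < r) := by
      rw [Multiset.mem_filter]
      exact ⟨(Polynomial.mem_roots hQ).mpr hzr, hz.1⟩
    rw [Multiset.card_eq_zero.mp hcard] at this
    exact absurd this (Multiset.notMem_zero z)
  | succ n ih =>
    intro Q hQ hlc hx hcard
    have hne : Q.roots.filter (fun r => x < r) ≠ 0 := by
      intro h; rw [h] at hcard; simp at hcard
    obtain ⟨r, hr⟩ := Multiset.exists_mem_of_ne_zero hne
    rw [Multiset.mem_filter] at hr
    have hxr : x < r := hr.2
    have hrroot : Q.IsRoot r := (Polynomial.mem_roots hQ).mp hr.1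
    obtain ⟨R, hR⟩ := Polynomial.dvd_iff_isRoot.mpr hrroot
    have hRne : R ≠ 0 := by rintro rfl; rw [mul_zero] at hR; exact hQ hR
    have hmulne : (Polynomial.X - Polynomial.C r) * R ≠ 0 := hR ▸ hQ
    have hlcR : 0 < R.leadingCoeff := by
      have : Q.leadingCoeff = R.leadingCoeff := by
        rw [hR, Polynomial.leadingCoeff_mul, Polynomial.leadingCoeff_X_sub_C, one_mul]
      rwa [this] at hlc
    have hevalQ : Q.eval x = (x - r) * R.eval x := by rw [hR]; simp
    have hRx : R.eval x ≠ 0 := by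
      intro h; rw [hevalQ, h, mul_zero] at hx; exact hx rfl
    have hroots : Q.roots = r ::ₘ R.roots := by
      rw [hR, Polynomial.roots_mul hmulne, Polynomial.roots_X_sub_C]
      rfl
    have hcardR : (R.roots.filter (fun r => x < r)).card = n := by
      have : Q.roots.filter (fun s => x < s) = r ::ₘ R.roots.filter (fun s => x < s) := by
        rw [hroots, Multiset.filter_cons, if_pos hxr]
        rfl
      rw [this, Multiset.card_cons] at hcard
      omega
    obtain ⟨hev, hod⟩ := ih R hRne hlcR hRx hcardR
    have hxr' : x - r < 0 := by linarith
    constructor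
    · intro h
      have : Odd n := Nat.not_even_iff_odd.mp (Nat.even_add_one.mp h)
      have := hod this
      rw [hevalQ]
      exact mul_pos_of_neg_of_neg hxr' this
    · intro h
      have hn : Even n := not_not.mp (fun he => (Nat.not_even_iff_odd.mpr h) (Nat.even_add_one.mpr he))
      have := hev hn
      rw [hevalQ]
      exact mul_neg_of_neg_of_pos hxr' this

/-- Let `P` be a nonzero real polynomial with positive leading coefficient and
`u₀` a root of `P` of multiplicity `j`. Let `N` be the sum of multiplicities of all real
roots of `P` strictly greater than `u₀` (the cardinality, with multiplicity, of the multiset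
of such roots). Then the sign of `P^{(j)}(u₀)` equals `(-1)^N`: it is positive if `N` is
even and negative if `N` is odd. -/
theorem iterated_deriv_sign_eq_neg_one_pow_roots_above
    (P : Polynomial ℝ) (hP : P ≠ 0) (hlc : 0 < P.leadingCoeff)
    (u₀ : ℝ) (hroot : P.eval u₀ = 0)
    (j : ℕ) (hj : j = Polynomial.rootMultiplicity u₀ P)
    (N : ℕ) (hN : N = (P.roots.filter (fun r => u₀ < r)).card) :
    (Even N → 0 < (Polynomial.derivative^[j] P).eval u₀) ∧
    (Odd N → (Polynomial.derivative^[j] P).eval u₀ < 0) := by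
  subst hj
  set m := Polynomial.rootMultiplicity u₀ P with hm
  set Q := P /ₘ (Polynomial.X - Polynomial.C u₀) ^ m with hQdef
  have hfact : P = (Polynomial.X - Polynomial.C u₀) ^ m * Q :=
    (Polynomial.pow_mul_divByMonic_rootMultiplicity_eq P u₀).symm
  have hQeval : Q.eval u₀ ≠ 0 := Polynomial.eval_divByMonic_pow_rootMultiplicity_ne_zero u₀ hP
  have hQne : Q ≠ 0 := fun h => hQeval (by rw [h]; simp)
  have hmulne : (Polynomial.X - Polynomial.C u₀) ^ m * Q ≠ 0 := hfact ▸ hP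
  have hlcQ : 0 < Q.leadingCoeff := by
    have : P.leadingCoeff = Q.leadingCoeff := by
      conv_lhs => rw [hfact]
      rw [Polynomial.leadingCoeff_mul, Polynomial.leadingCoeff_pow,
        Polynomial.leadingCoeff_X_sub_C, one_pow, one_mul]
    rwa [this] at hlc
  have hroots : P.roots = Multiset.replicate m u₀ + Q.roots := by
    conv_lhs => rw [hfact]
    rw [Polynomial.roots_mul hmulne, Polynomial.roots_pow, Polynomial.roots_X_sub_C]
    simp [Multiset.nsmul_singleton]
  have hNQ : N = (Q.roots.filter (fun r => u₀ < r)).card := by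
    rw [hN, hroots, Multiset.filter_add]
    have : (Multiset.replicate m u₀).filter (fun r => u₀ < r) = 0 := by
      rw [Multiset.filter_eq_nil]
      intro a ha
      rw [Multiset.eq_of_mem_replicate ha]
      exact lt_irrefl u₀
    rw [this, zero_add]
  obtain ⟨hev, hod⟩ := sign_eval_aux (x := u₀) N Q hQne hlcQ hQeval hNQ.symm
  have hkey : (Polynomial.derivative^[m] P).eval u₀ = m.factorial • Q.eval u₀ :=
    Polynomial.eval_iterate_derivative_rootMultiplicity
  have hfpos : (0:ℝ) < m.factorial := by exact_mod_cast m.factorial_pos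
  constructor
  · intro h
    rw [hkey, nsmul_eq_mul]
    exact mul_pos hfpos (hev h)
  · intro h
    rw [hkey, nsmul_eq_mul]
    exact mul_neg_of_pos_of_neg hfpos (hod h)
end

section
/- Let P be a nonzero polynomial with real coefficients of even degree d ≥ 2 and positive leading coefficient, and let Z = {u ∈ ℝ : P(u) ≤ 0}. (1) If a singleton {u₀} is a connected component of Z, then u₀ is a root of P of even multiplicity. (2) If a closed interval [a, b] with a < b is a connected component of Z, then a and b are roots of P of odd multiplicity, and every root of P lying in the open interval (a, b) has even multiplicity. -/
open Polynomial

lemma my_key (P : Polynomial ℝ) (hP : P ≠ 0) (u : ℝ) :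
    ∃ δ > 0, ∃ q : ℝ → ℝ,
      (∀ x, P.eval x = (x - u) ^ (P.rootMultiplicity u) * q x) ∧
      (∀ x, |x - u| < δ → 0 < q x * q u) := by
  set Q := P /ₘ (X - C u) ^ (P.rootMultiplicity u) with hQ
  have hq : Q.eval u ≠ 0 := eval_divByMonic_pow_rootMultiplicity_ne_zero u hP
  have hopen : IsOpen {x : ℝ | 0 < Q.eval x * Q.eval u} :=
    isOpen_lt continuous_const (Q.continuous.mul continuous_const)
  have hmem : u ∈ {x : ℝ | 0 < Q.eval x * Q.eval u} := mul_self_pos.mpr hq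
  obtain ⟨δ, hδ, hball⟩ := Metric.isOpen_iff.mp hopen u hmem
  refine ⟨δ, hδ, fun x => Q.eval x, fun x => ?_, fun x hx => ?_⟩
  · conv_lhs => rw [← P.pow_mul_divByMonic_rootMultiplicity_eq u]
    simp [← hQ]
  · exact hball (by simpa [Real.dist_eq] using hx)

lemma my_neg_ball (P : Polynomial ℝ) {u : ℝ} (h : P.eval u < 0) :
    ∃ δ > 0, ∀ x, |x - u| < δ → P.eval x < 0 := by
  have hopen : IsOpen {x : ℝ | P.eval x < 0} := isOpen_lt P.continuous continuous_const
  obtain ⟨δ, hδ, hball⟩ := Metric.isOpen_iff.mp hopen u h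
  exact ⟨δ, hδ, fun x hx => hball (by simpa [Real.dist_eq] using hx)⟩

set_option maxHeartbeats 2000000

/-- Let `P` be a nonzero real polynomial of even degree `d ≥ 2` with positive
leading coefficient and `Z = {u : P(u) ≤ 0}`.
(1) If a singleton `{u₀}` is a connected component of `Z`, then `u₀` is a root of `P` of
even multiplicity.
(2) If `[a, b]` with `a < b` is a connected component of `Z`, then `a` and `b` are roots of
`P` of odd multiplicity, and every root of `P` in the open interval `(a, b)` has even
multiplicity. -/
theorem atoms_and_strings_multiplicities
    (P : Polynomial ℝ) (hP : P ≠ 0) (hdeg : Even P.natDegree)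
    (hd2 : 2 ≤ P.natDegree) (hlc : 0 < P.leadingCoeff)
    (Z : Set ℝ) (hZ : Z = {u : ℝ | P.eval u ≤ 0}) :
    (∀ u₀ : ℝ, u₀ ∈ Z → connectedComponentIn Z u₀ = {u₀} →
        P.eval u₀ = 0 ∧ Even (Polynomial.rootMultiplicity u₀ P)) ∧
    (∀ a b : ℝ, a < b → a ∈ Z → connectedComponentIn Z a = Set.Icc a b →
        (P.eval a = 0 ∧ Odd (Polynomial.rootMultiplicity a P)) ∧
        (P.eval b = 0 ∧ Odd (Polynomial.rootMultiplicity b P)) ∧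
        (∀ u ∈ Set.Ioo a b, P.eval u = 0 → Even (Polynomial.rootMultiplicity u P))) := by
  subst hZ
  have hsub : ∀ (x : ℝ) (c e : ℝ), x ∈ Set.Icc c e → Set.Icc c e ⊆ {u : ℝ | P.eval u ≤ 0} →
      Set.Icc c e ⊆ connectedComponentIn {u : ℝ | P.eval u ≤ 0} x :=
    fun x c e hx h => isPreconnected_Icc.subset_connectedComponentIn hx h
  constructor
  · -- singleton case
    intro u₀ hu₀ hcomp
    have hle : P.eval u₀ ≤ 0 := hu₀
    -- P(u₀) = 0
    have he : P.eval u₀ = 0 := by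
      rcases lt_or_eq_of_le hle with hlt | h
      · exfalso
        obtain ⟨δ, hδ, hball⟩ := my_neg_ball P hlt
        have hIcc : Set.Icc u₀ (u₀ + δ / 2) ⊆ {u : ℝ | P.eval u ≤ 0} := by
          intro x hx
          have : |x - u₀| < δ := by
            rw [abs_lt]; constructor <;> [linarith [hx.1]; linarith [hx.2]]
          exact le_of_lt (hball x this)
        have := hsub u₀ u₀ (u₀ + δ / 2) ⟨le_refl _, by linarith⟩ hIcc
        rw [hcomp] at this
        have := this ⟨le_refl _, le_of_lt (by linarith)⟩
        have h2 : u₀ + δ / 2 ∈ ({u₀} : Set ℝ) :=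
          (hcomp ▸ hsub u₀ u₀ (u₀ + δ / 2) ⟨le_refl _, by linarith⟩ hIcc)
            ⟨by linarith, le_refl _⟩
        simp at h2; linarith
      · exact h
    obtain ⟨δ, hδ, q, hfac, hsign⟩ := my_key P hP u₀
    set m := P.rootMultiplicity u₀ with hm
    have hmpos : 0 < m := (rootMultiplicity_pos hP).mpr he
    have hqne : q u₀ ≠ 0 := by
      intro h; have := hsign u₀ (by simpa using hδ); rw [h] at this; simp at this
    -- q u₀ > 0
    have hqpos : 0 < q u₀ := by
      rcases hqne.lt_or_gt with hneg | hpos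
      · exfalso
        have hIcc : Set.Icc u₀ (u₀ + δ / 2) ⊆ {u : ℝ | P.eval u ≤ 0} := by
          intro x hx
          rcases eq_or_lt_of_le hx.1 with rfl | hlt
          · exact le_of_eq he
          · have hax : |x - u₀| < δ := by rw [abs_lt]; constructor <;> [linarith [hx.1]; linarith [hx.2]]
            have hqx : q x < 0 := by nlinarith [hsign x hax]
            have hpow : 0 < (x - u₀) ^ m := pow_pos (by linarith) m
            have := hfac x
            simp only [Set.mem_setOf_eq, this]
            nlinarith
        have h2 : u₀ + δ / 2 ∈ ({u₀} : Set ℝ) :=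
          (hcomp ▸ hsub u₀ u₀ (u₀ + δ / 2) ⟨le_refl _, by linarith⟩ hIcc)
            ⟨by linarith, le_refl _⟩
        simp at h2; linarith
      · exact hpos
    -- m even
    rcases Nat.even_or_odd m with hev | hodd
    · exact ⟨he, hev⟩
    · exfalso
      have hIcc : Set.Icc (u₀ - δ / 2) u₀ ⊆ {u : ℝ | P.eval u ≤ 0} := by
        intro x hx
        rcases eq_or_lt_of_le hx.2 with rfl | hlt
        · exact le_of_eq he
        · have hax : |x - u₀| < δ := by rw [abs_lt]; constructor <;> [linarith [hx.1]; linarith [hx.2]]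
          have hqx : 0 < q x := by nlinarith [hsign x hax]
          have hpow : (x - u₀) ^ m < 0 := hodd.pow_neg (by linarith)
          have := hfac x
          simp only [Set.mem_setOf_eq, this]
          nlinarith
      have h2 : u₀ - δ / 2 ∈ ({u₀} : Set ℝ) :=
        (hcomp ▸ hsub u₀ (u₀ - δ / 2) u₀ ⟨by linarith, le_refl _⟩ hIcc)
          ⟨le_refl _, by linarith⟩
      simp at h2; linarith
  · -- interval case
    intro a b hab ha hcomp
    have hIccZ : Set.Icc a b ⊆ {u : ℝ | P.eval u ≤ 0} := by
      rw [← hcomp]; exact connectedComponentIn_subset _ _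
    -- points just right of b with P > 0
    have hright : ∀ ε > (0:ℝ), ∃ x, b < x ∧ x < b + ε ∧ 0 < P.eval x := by
      intro ε hε
      by_contra hcon
      push_neg at hcon
      have hIcc : Set.Icc a (b + ε / 2) ⊆ {u : ℝ | P.eval u ≤ 0} := by
        intro x hx
        rcases le_or_gt x b with h | h
        · exact hIccZ ⟨hx.1, h⟩
        · exact hcon x h (by linarith [hx.2])
      have h2 : b + ε / 2 ∈ Set.Icc a b :=
        (hcomp ▸ hsub a a (b + ε / 2) ⟨le_refl _, by linarith⟩ hIcc)
          ⟨by linarith, le_refl _⟩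
      linarith [h2.2]
    have hleft : ∀ ε > (0:ℝ), ∃ x, a - ε < x ∧ x < a ∧ 0 < P.eval x := by
      intro ε hε
      by_contra hcon
      push_neg at hcon
      have hIcc : Set.Icc (a - ε / 2) b ⊆ {u : ℝ | P.eval u ≤ 0} := by
        intro x hx
        rcases lt_or_ge x a with h | h
        · exact hcon x (by linarith [hx.1]) h
        · exact hIccZ ⟨h, hx.2⟩
      have h2 : a - ε / 2 ∈ Set.Icc a b :=
        (hcomp ▸ hsub a (a - ε / 2) b ⟨by linarith, by linarith⟩ hIcc)
          ⟨le_refl _, by linarith⟩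
      linarith [h2.1]
    -- roots at endpoints
    have heb : P.eval b = 0 := by
      have hle : P.eval b ≤ 0 := hIccZ ⟨le_of_lt hab, le_refl _⟩
      rcases lt_or_eq_of_le hle with hlt | h
      · exfalso
        obtain ⟨δ, hδ, hball⟩ := my_neg_ball P hlt
        obtain ⟨x, hx1, hx2, hx3⟩ := hright δ hδ
        have : P.eval x < 0 := hball x (by rw [abs_lt]; constructor <;> linarith)
        linarith
      · exact h
    have hea : P.eval a = 0 := by
      have hle : P.eval a ≤ 0 := hIccZ ⟨le_refl _, le_of_lt hab⟩
      rcases lt_or_eq_of_le hle with hlt | h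
      · exfalso
        obtain ⟨δ, hδ, hball⟩ := my_neg_ball P hlt
        obtain ⟨x, hx1, hx2, hx3⟩ := hleft δ hδ
        have : P.eval x < 0 := hball x (by rw [abs_lt]; constructor <;> linarith)
        linarith
      · exact h
    refine ⟨⟨hea, ?_⟩, ⟨heb, ?_⟩, ?_⟩
    · -- odd at a
      obtain ⟨δ, hδ, q, hfac, hsign⟩ := my_key P hP a
      set m := P.rootMultiplicity a with hm
      -- q a < 0 from the right side
      have hqa : q a < 0 := by
        set x := min ((a + b) / 2) (a + δ / 2) with hx
        have hx1 : a < x := by apply lt_min <;> [linarith; linarith]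
        have hx2 : x ≤ (a + b) / 2 := min_le_left _ _
        have hx3 : x ≤ a + δ / 2 := min_le_right _ _
        have hax : |x - a| < δ := by rw [abs_lt]; constructor <;> linarith
        have hPx : P.eval x ≤ 0 := hIccZ ⟨le_of_lt hx1, by linarith⟩
        have hpow : 0 < (x - a) ^ m := pow_pos (by linarith) m
        have hqx : q x < 0 := by
          rcases lt_trichotomy (q x) 0 with h | h | h
          · exact h
          · exfalso; have := hsign x hax; rw [h] at this; simp at this
          · exfalso; nlinarith [hfac x]
        nlinarith [hsign x hax]
      rcases Nat.even_or_odd m with hev | hodd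
      · exfalso
        obtain ⟨x, hx1, hx2, hx3⟩ := hleft δ hδ
        have hax : |x - a| < δ := by rw [abs_lt]; constructor <;> linarith
        have hqx : q x < 0 := by nlinarith [hsign x hax]
        have hpow : 0 ≤ (x - a) ^ m := hev.pow_nonneg _
        nlinarith [hfac x]
      · exact hodd
    · -- odd at b
      obtain ⟨δ, hδ, q, hfac, hsign⟩ := my_key P hP b
      set m := P.rootMultiplicity b with hm
      have hqb : 0 < q b := by
        obtain ⟨x, hx1, hx2, hx3⟩ := hright δ hδ
        have hax : |x - b| < δ := by rw [abs_lt]; constructor <;> linarith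
        have hpow : 0 < (x - b) ^ m := pow_pos (by linarith) m
        have hqx : 0 < q x := by nlinarith [hfac x]
        nlinarith [hsign x hax]
      rcases Nat.even_or_odd m with hev | hodd
      · exfalso
        set x := max ((a + b) / 2) (b - δ / 2) with hx
        have hx1 : x < b := by apply max_lt <;> [linarith; linarith]
        have hx2 : (a + b) / 2 ≤ x := le_max_left _ _
        have hx3 : b - δ / 2 ≤ x := le_max_right _ _
        have hax : |x - b| < δ := by rw [abs_lt]; constructor <;> linarith
        have hPx : P.eval x ≤ 0 := hIccZ ⟨by linarith, le_of_lt hx1⟩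
        have hqx : 0 < q x := by nlinarith [hsign x hax]
        have hpow : 0 < (x - b) ^ m := hev.pow_pos (by intro h; rw [sub_eq_zero] at h; linarith)
        nlinarith [hfac x]
      · exact hodd
    · -- interior roots even
      intro u hu heu
      obtain ⟨δ, hδ, q, hfac, hsign⟩ := my_key P hP u
      set m := P.rootMultiplicity u with hm
      have hua : a < u := hu.1
      have hub : u < b := hu.2
      have hmpos : 0 < m := (rootMultiplicity_pos hP).mpr heu
      -- q u < 0 from the right side
      have hqu : q u < 0 := by
        set x := min ((u + b) / 2) (u + δ / 2) with hx
        have hx1 : u < x := by apply lt_min <;> [linarith; linarith]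
        have hx2 : x ≤ (u + b) / 2 := min_le_left _ _
        have hx3 : x ≤ u + δ / 2 := min_le_right _ _
        have hax : |x - u| < δ := by rw [abs_lt]; constructor <;> linarith
        have hPx : P.eval x ≤ 0 := hIccZ ⟨by linarith, by linarith⟩
        have hpow : 0 < (x - u) ^ m := pow_pos (by linarith) m
        have hqx : q x < 0 := by
          rcases lt_trichotomy (q x) 0 with h | h | h
          · exact h
          · exfalso; have := hsign x hax; rw [h] at this; simp at this
          · exfalso; nlinarith [hfac x]
        nlinarith [hsign x hax]
      rcases Nat.even_or_odd m with hev | hodd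
      · exact hev
      · exfalso
        set x := max ((a + u) / 2) (u - δ / 2) with hx
        have hx1 : x < u := by apply max_lt <;> [linarith; linarith]
        have hx2 : (a + u) / 2 ≤ x := le_max_left _ _
        have hx3 : u - δ / 2 ≤ x := le_max_right _ _
        have hax : |x - u| < δ := by rw [abs_lt]; constructor <;> linarith
        have hPx : P.eval x ≤ 0 := hIccZ ⟨by linarith, by linarith⟩
        have hqx : q x < 0 := by nlinarith [hsign x hax]
        have hpow : (x - u) ^ m < 0 := hodd.pow_neg (by linarith)
        nlinarith [hfac x]
end

section
/- Let P be a nonzero polynomial with real coefficients of degree d, and let u₀ ∈ ℝ be a root of P of multiplicity j. Then there exist δ > 0 and ε > 0 such that every polynomial Q with real coefficients satisfying deg Q ≤ d and |coefficient of Q at Xᵏ − coefficient of P at Xᵏ| < ε for all 0 ≤ k ≤ d has at most j real roots, counted with multiplicity, in the interval [u₀ − δ, u₀ + δ]. -/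
open Polynomial Multiset

namespace LocalRootCountAux

/-- Iterated derivative commutes with finite sums. -/
lemma iterate_derivative_finset_sum {s : Finset ℕ} (f : ℕ → Polynomial ℝ) (n : ℕ) :
    derivative^[n] (∑ i ∈ s, f i) = ∑ i ∈ s, derivative^[n] (f i) := by
  induction n with
  | zero => simp
  | succ n ih =>
    simp only [Function.iterate_succ_apply', ih, Polynomial.derivative_sum]

lemma iterate_derivative_add (p q : Polynomial ℝ) (n : ℕ) :
    derivative^[n] (p + q) = derivative^[n] p + derivative^[n] q := by
  induction n with
  | zero => simp
  | succ n ih =>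
    simp only [Function.iterate_succ_apply', ih, Polynomial.derivative_add]

/-- Finset version of the localized Rolle counting. -/
lemma card_toFinset_filter_le (a b : ℝ) (p : Polynomial ℝ) :
    (p.roots.filter (fun r => a ≤ r ∧ r ≤ b)).toFinset.card ≤
      (((derivative p).roots.filter (fun r => a ≤ r ∧ r ≤ b)).toFinset \
        (p.roots.filter (fun r => a ≤ r ∧ r ≤ b)).toFinset).card + 1 := by
  rcases eq_or_ne (derivative p) 0 with hp' | hp'
  · rw [Polynomial.eq_C_of_derivative_eq_zero hp', roots_C]
    simp
  have hp : p ≠ 0 := fun h => hp' (by rw [h, Polynomial.derivative_zero])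
  refine Finset.card_le_diff_of_interleaved fun x hx y hy hxy _ => ?_
  rw [Multiset.mem_toFinset, Multiset.mem_filter, mem_roots hp] at hx hy
  obtain ⟨z, hz1, hz2⟩ :=
    exists_deriv_eq_zero hxy p.continuousOn (hx.1.trans hy.1.symm)
  refine ⟨z, ?_, hz1.1, hz1.2⟩
  rw [Multiset.mem_toFinset, Multiset.mem_filter, mem_roots hp']
  exact ⟨by rwa [IsRoot, ← p.deriv], hx.2.1.trans hz1.1.le, hz1.2.le.trans hy.2.2⟩

/-- Localized version of `Polynomial.card_roots_le_derivative`. -/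
lemma card_filter_le_derivative (a b : ℝ) (p : Polynomial ℝ) :
    Multiset.card (p.roots.filter (fun r => a ≤ r ∧ r ≤ b)) ≤
      Multiset.card ((derivative p).roots.filter (fun r => a ≤ r ∧ r ≤ b)) + 1 := by
  classical
  set m := p.roots.filter (fun r => a ≤ r ∧ r ≤ b) with hm
  set m' := (derivative p).roots.filter (fun r => a ≤ r ∧ r ≤ b) with hm'
  calc
    Multiset.card m = ∑ x ∈ m.toFinset, m.count x := (Multiset.toFinset_sum_count_eq _).symm
    _ = ∑ x ∈ m.toFinset, (m.count x - 1 + 1) :=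
      (Finset.sum_congr rfl fun x hx => (tsub_add_cancel_of_le <|
        Nat.succ_le_iff.2 <| Multiset.count_pos.2 <| Multiset.mem_toFinset.1 hx).symm)
    _ = (∑ x ∈ m.toFinset, (m.count x - 1)) + m.toFinset.card := by
      simp only [Finset.sum_add_distrib, Finset.card_eq_sum_ones]
    _ ≤ (∑ x ∈ m.toFinset, m'.count x) + ((m'.toFinset \ m.toFinset).card + 1) := by
      refine add_le_add (Finset.sum_le_sum fun x hx => ?_) (card_toFinset_filter_le a b p)
      have hpx : a ≤ x ∧ x ≤ b := (Multiset.mem_filter.mp (Multiset.mem_toFinset.mp hx)).2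
      rw [hm, hm', Multiset.count_filter, if_pos hpx, Multiset.count_filter, if_pos hpx,
        count_roots, count_roots]
      exact Nat.sub_le_iff_le_add.mpr <| Nat.sub_le_iff_le_add.mp <|
        Polynomial.rootMultiplicity_sub_one_le_derivative_rootMultiplicity p x
    _ ≤ (∑ x ∈ m.toFinset, m'.count x) +
          ((∑ x ∈ m'.toFinset \ m.toFinset, m'.count x) + 1) := by
      refine add_le_add_right (add_le_add_left ((Finset.card_eq_sum_ones _).trans_le ?_) _) _
      refine Finset.sum_le_sum fun x hx => Nat.succ_le_iff.2 ?_
      rw [Multiset.count_pos, ← Multiset.mem_toFinset]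
      exact (Finset.mem_sdiff.1 hx).1
    _ = Multiset.card m' + 1 := by
      rw [← add_assoc, ← Finset.sum_union Finset.disjoint_sdiff,
        Finset.union_sdiff_self_eq_union, ← Multiset.toFinset_sum_count_eq,
        ← Finset.sum_subset (Finset.subset_union_right (s₁ := m.toFinset))]
      intro x _ hx₂
      simpa only [Multiset.mem_toFinset, Multiset.count_eq_zero] using hx₂

lemma card_filter_le_iterate (a b : ℝ) (p : Polynomial ℝ) (n : ℕ) :
    Multiset.card (p.roots.filter (fun r => a ≤ r ∧ r ≤ b)) ≤
      Multiset.card ((derivative^[n] p).roots.filter (fun r => a ≤ r ∧ r ≤ b)) + n := by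
  induction n with
  | zero => simp
  | succ n ih =>
    refine ih.trans ?_
    have h := card_filter_le_derivative a b (derivative^[n] p)
    rw [Function.iterate_succ_apply']
    omega

lemma eval_iterate_ne_zero : ∀ (j : ℕ) (p : Polynomial ℝ) (u : ℝ), p ≠ 0 →
    p.rootMultiplicity u = j → (derivative^[j] p).eval u ≠ 0 := by
  intro j
  induction j with
  | zero =>
    intro p u hp h
    rw [Function.iterate_zero_apply]
    intro he
    have := (Polynomial.rootMultiplicity_pos hp).mpr he
    omega
  | succ n ih =>
    intro p u hp h
    have hroot : p.IsRoot u := by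
      by_contra hc
      rw [Polynomial.rootMultiplicity_eq_zero hc] at h
      omega
    have hd : derivative p ≠ 0 := by
      intro hc
      have hC := Polynomial.eq_C_of_derivative_eq_zero hc
      rw [hC] at hroot hp
      rw [Polynomial.IsRoot, Polynomial.eval_C] at hroot
      rw [hroot] at hp
      simp at hp
    have hm : (derivative p).rootMultiplicity u = n := by
      rw [Polynomial.derivative_rootMultiplicity_of_root hroot, h]
      omega
    rw [Function.iterate_succ_apply]
    exact ih (derivative p) u hd hm

end LocalRootCountAux

open LocalRootCountAux

/-- Let `P` be a nonzero real polynomial of degree `d` and `u₀` a root of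
multiplicity `j`. Then there are `δ > 0` and `ε > 0` such that every real polynomial `Q`
with `deg Q ≤ d` whose coefficients are `ε`-close to those of `P` has at most `j` real
roots, counted with multiplicity, in `[u₀ - δ, u₀ + δ]`. -/
theorem local_root_count_upper_bound
    (P : Polynomial ℝ) (hP : P ≠ 0) (d : ℕ) (hd : d = P.natDegree)
    (u₀ : ℝ) (hroot : P.eval u₀ = 0)
    (j : ℕ) (hj : j = Polynomial.rootMultiplicity u₀ P) :
    ∃ δ > 0, ∃ ε > 0, ∀ Q : Polynomial ℝ, Q.natDegree ≤ d →
      (∀ k : ℕ, k ≤ d → |Q.coeff k - P.coeff k| < ε) →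
      (Q.roots.filter (fun r => u₀ - δ ≤ r ∧ r ≤ u₀ + δ)).card ≤ j := by
  have hjd : j ≤ d := by
    rw [hj, hd]
    exact (Polynomial.natDegree_le_of_dvd (Polynomial.pow_rootMultiplicity_dvd P u₀) hP).trans_eq'
      (by rw [Polynomial.natDegree_pow, Polynomial.natDegree_X_sub_C, mul_one])
  set D := derivative^[j] P with hD
  have hDu : D.eval u₀ ≠ 0 := eval_iterate_ne_zero j P u₀ hP hj.symm
  set c : ℝ := |D.eval u₀| / 2 with hc
  have hcpos : 0 < c := by
    have : 0 < |D.eval u₀| := abs_pos.mpr hDu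
    linarith
  obtain ⟨δ', hδ'pos, hball⟩ := Metric.continuousAt_iff.mp (D.continuous.continuousAt (x := u₀)) c hcpos
  refine ⟨δ' / 2, by linarith, ?_⟩
  set δ : ℝ := δ' / 2 with hδ
  -- lower bound for |D| on the interval
  have hDlow : ∀ x : ℝ, u₀ - δ ≤ x → x ≤ u₀ + δ → c < |D.eval x| := by
    intro x h1 h2
    have hdist : dist x u₀ < δ' := by
      rw [Real.dist_eq]
      have : |x - u₀| ≤ δ := abs_le.mpr ⟨by linarith, by linarith⟩
      linarith
    have h3 := hball hdist
    rw [Real.dist_eq] at h3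
    have h4 : |D.eval u₀| - |D.eval x| ≤ |D.eval u₀ - D.eval x| :=
      abs_sub_abs_le_abs_sub _ _
    rw [abs_sub_comm] at h4
    have : |D.eval u₀| = 2 * c := by rw [hc]; ring
    linarith
  set A : ℝ := |u₀| + δ + 1 with hA
  have hA1 : (1 : ℝ) ≤ A := by
    have := abs_nonneg u₀
    rw [hA]; linarith
  set B : ℝ := ((d : ℝ) + 1) ^ d * A ^ d with hB
  have hBpos : 0 < B := by positivity
  -- bound on iterated derivatives of monomials on the interval
  have hmono : ∀ (i : ℕ), i ≤ d → ∀ x : ℝ, |x| ≤ A →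
      |(derivative^[j] ((X : Polynomial ℝ) ^ i)).eval x| ≤ B := by
    intro i hi x hx
    rw [Polynomial.iterate_derivative_X_pow_eq_smul]
    rw [Polynomial.smul_eq_C_mul, Polynomial.eval_mul, Polynomial.eval_C, Polynomial.eval_pow,
      Polynomial.eval_X, abs_mul, abs_pow]
    have h1 : |((i.descFactorial j : ℝ))| ≤ ((d : ℝ) + 1) ^ d := by
      rw [Nat.abs_cast]
      have hnat : i.descFactorial j ≤ (d + 1) ^ d :=
        (Nat.descFactorial_le_pow i j).trans
          ((Nat.pow_le_pow_left (by omega) j).trans (Nat.pow_le_pow_right (by omega) hjd))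
      calc ((i.descFactorial j : ℝ)) ≤ (((d + 1) ^ d : ℕ) : ℝ) := by exact_mod_cast hnat
        _ = ((d : ℝ) + 1) ^ d := by push_cast; ring
    have h2 : |x| ^ (i - j) ≤ A ^ d := by
      calc |x| ^ (i - j) ≤ A ^ (i - j) := pow_le_pow_left₀ (abs_nonneg x) hx _
        _ ≤ A ^ d := pow_le_pow_right₀ hA1 (by omega)
    have h0 : (0 : ℝ) ≤ |x| ^ (i - j) := by positivity
    calc |((i.descFactorial j : ℝ))| * |x| ^ (i - j)
        ≤ ((d : ℝ) + 1) ^ d * (A ^ d) := by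
          apply mul_le_mul h1 h2 h0 (by positivity)
      _ = B := by rw [hB]
  set M : ℝ := (d + 1 : ℝ) * B with hM
  have hMpos : 0 < M := by positivity
  refine ⟨c / (M + 1), by positivity, ?_⟩
  set ε : ℝ := c / (M + 1) with hε
  have hεM : ε * M < c := by
    rw [hε]
    rw [div_mul_eq_mul_div, div_lt_iff₀ (by linarith)]
    nlinarith
  intro Q hQdeg hQcoeff
  rcases eq_or_ne Q 0 with rfl | hQ
  · simp
  set E : Polynomial ℝ := Q - P with hE
  have hEdeg : E.natDegree < d + 1 := by
    have := Polynomial.natDegree_sub_le Q P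
    have : E.natDegree ≤ d := (Polynomial.natDegree_sub_le Q P).trans
      (max_le hQdeg (le_of_eq hd.symm))
    omega
  have hEcoeff : ∀ i : ℕ, i ≤ d → |E.coeff i| < ε := by
    intro i hi
    rw [hE, Polynomial.coeff_sub]
    exact hQcoeff i hi
  -- bound the iterated derivative of E on the interval
  have hEbound : ∀ x : ℝ, |x| ≤ A → |(derivative^[j] E).eval x| ≤ ε * M := by
    intro x hx
    have hEsum : E = ∑ i ∈ Finset.range (d + 1), Polynomial.C (E.coeff i) * X ^ i := by
      conv_lhs => rw [Polynomial.as_sum_range' E (d + 1) hEdeg]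
      exact Finset.sum_congr rfl fun i _ => (Polynomial.C_mul_X_pow_eq_monomial).symm
    rw [hEsum, iterate_derivative_finset_sum]
    simp only [Polynomial.iterate_derivative_C_mul, Polynomial.eval_finset_sum,
      Polynomial.eval_mul, Polynomial.eval_C]
    calc |∑ i ∈ Finset.range (d + 1), E.coeff i * (derivative^[j] ((X : Polynomial ℝ) ^ i)).eval x|
        ≤ ∑ i ∈ Finset.range (d + 1),
            |E.coeff i * (derivative^[j] ((X : Polynomial ℝ) ^ i)).eval x| :=
          Finset.abs_sum_le_sum_abs _ _
      _ ≤ ∑ _i ∈ Finset.range (d + 1), ε * B := by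
          refine Finset.sum_le_sum fun i hi => ?_
          rw [abs_mul]
          have hid : i ≤ d := Nat.lt_succ_iff.mp (Finset.mem_range.mp hi)
          exact mul_le_mul (le_of_lt (hEcoeff i hid))
            (hmono i hid x hx) (abs_nonneg _) (by positivity)
      _ = ε * M := by
          rw [Finset.sum_const, Finset.card_range, hM]
          push_cast
          ring
  -- the j-th derivative of Q does not vanish on the interval
  have hQj : ∀ x : ℝ, u₀ - δ ≤ x → x ≤ u₀ + δ → (derivative^[j] Q).eval x ≠ 0 := by
    intro x h1 h2 hzero
    have hQPE : Q = P + E := by rw [hE]; ring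
    have hxA : |x| ≤ A := by
      rw [hA]
      rcases abs_le.mp (le_refl |u₀|) with _
      have : |x - u₀| ≤ δ := abs_le.mpr ⟨by linarith, by linarith⟩
      calc |x| = |u₀ + (x - u₀)| := by ring_nf
        _ ≤ |u₀| + |x - u₀| := abs_add_le _ _
        _ ≤ |u₀| + δ + 1 := by linarith
    have hsplit : (derivative^[j] Q).eval x = D.eval x + (derivative^[j] E).eval x := by
      rw [hQPE, iterate_derivative_add, Polynomial.eval_add, hD]
    rw [hsplit] at hzero
    have h3 : |D.eval x| = |(derivative^[j] E).eval x| := by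
      have : D.eval x = -(derivative^[j] E).eval x := by linarith
      rw [this, abs_neg]
    have h4 := hDlow x h1 h2
    have h5 := hEbound x hxA
    linarith
  -- conclude
  by_contra hcard
  push_neg at hcard
  have hkey := card_filter_le_iterate (u₀ - δ) (u₀ + δ) Q j
  have hpos : 0 < Multiset.card
      ((derivative^[j] Q).roots.filter (fun r => u₀ - δ ≤ r ∧ r ≤ u₀ + δ)) := by omega
  obtain ⟨r, hr⟩ := Multiset.card_pos_iff_exists_mem.mp hpos
  rw [Multiset.mem_filter] at hr
  obtain ⟨hr1, hr2, hr3⟩ := hr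
  have := (Polynomial.mem_roots'.mp hr1).2
  exact hQj r hr2 hr3 this
end

section
/- Let P be a nonzero polynomial with real coefficients of degree d, and let u₀ ∈ ℝ be a root of P of multiplicity j ≥ 1. Then for every δ > 0 and every ε > 0 there exists a polynomial Q with real coefficients of degree d such that |coefficient of Q at Xᵏ − coefficient of P at Xᵏ| < ε for all 0 ≤ k ≤ d, and Q has at least j distinct real roots in the open interval (u₀ − δ, u₀ + δ), each of multiplicity exactly 1. -/
open Polynomial

private lemma cont_coeff_prod (f : ℕ → ℝ → ℝ) (hf : ∀ i, Continuous (f i)) (n : ℕ) :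
    ∀ k : ℕ, Continuous fun η => (∏ i ∈ Finset.range n, (X - C (f i η))).coeff k := by
  induction n with
  | zero =>
    intro k
    simp only [Finset.range_zero, Finset.prod_empty, Polynomial.coeff_one]
    exact continuous_const
  | succ n ih =>
    intro k
    cases k with
    | zero =>
      have h : (fun η => (∏ i ∈ Finset.range (n+1), (X - C (f i η))).coeff 0)
          = fun η => (∏ i ∈ Finset.range n, (X - C (f i η))).coeff 0 * (-(f n η)) := by
        funext η
        rw [Finset.prod_range_succ, Polynomial.mul_coeff_zero]
        simp
      rw [h]
      exact (ih 0).mul (hf n).neg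
    | succ m =>
      have h : (fun η => (∏ i ∈ Finset.range (n+1), (X - C (f i η))).coeff (m+1))
          = fun η => (∏ i ∈ Finset.range n, (X - C (f i η))).coeff m
              - (∏ i ∈ Finset.range n, (X - C (f i η))).coeff (m+1) * f n η := by
        funext η
        rw [Finset.prod_range_succ, Polynomial.coeff_mul_X_sub_C]
      rw [h]
      exact (ih m).sub ((ih (m+1)).mul (hf n))

/-- Let `P` be a nonzero real polynomial of degree `d` and `u₀` a root of
multiplicity `j ≥ 1`. For every `δ > 0` and `ε > 0` there is a real polynomial `Q` of
degree `d`, with all coefficients `ε`-close to those of `P`, having at least `j` distinct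
real roots in `(u₀ - δ, u₀ + δ)`, each of multiplicity exactly `1`. -/
theorem local_root_count_realized_by_perturbation
    (P : Polynomial ℝ) (hP : P ≠ 0) (d : ℕ) (hd : d = P.natDegree)
    (u₀ : ℝ) (hroot : P.eval u₀ = 0)
    (j : ℕ) (hj : j = Polynomial.rootMultiplicity u₀ P) (hj1 : 1 ≤ j) :
    ∀ δ > 0, ∀ ε > 0, ∃ Q : Polynomial ℝ,
      Q.natDegree = d ∧
      (∀ k : ℕ, k ≤ d → |Q.coeff k - P.coeff k| < ε) ∧
      ∃ S : Finset ℝ, j ≤ S.card ∧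
        ∀ r ∈ S, r ∈ Set.Ioo (u₀ - δ) (u₀ + δ) ∧ Q.eval r = 0 ∧
          Polynomial.rootMultiplicity r Q = 1 := by
  intro δ hδ ε hε
  set R : Polynomial ℝ := P /ₘ (X - C u₀) ^ j with hR
  have hfac : (X - C u₀) ^ j * R = P := by
    rw [hR, hj]; exact Polynomial.pow_mul_divByMonic_rootMultiplicity_eq P u₀
  have hRu : R.eval u₀ ≠ 0 := by
    rw [hR, hj]; exact Polynomial.eval_divByMonic_pow_rootMultiplicity_ne_zero u₀ hP
  have hRne : R ≠ 0 := fun h => hRu (by simp [h])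
  set f : ℕ → ℝ → ℝ := fun i η => u₀ + i * η with hfdef
  set Qf : ℝ → Polynomial ℝ := fun η => R * ∏ i ∈ Finset.range j, (X - C (f i η)) with hQf
  have hQ0 : Qf 0 = P := by
    have h1 : ∀ i ∈ Finset.range j, (X - C (f i 0)) = X - C u₀ := by
      intro i _; simp [hfdef]
    simp only [hQf]
    rw [Finset.prod_congr rfl h1, Finset.prod_const, Finset.card_range, mul_comm, hfac]
  have hfc : ∀ i : ℕ, Continuous (f i) := fun i =>
    continuous_const.add (continuous_const.mul continuous_id)
  have hcont : ∀ k : ℕ, Continuous fun η => (Qf η).coeff k := by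
    intro k
    have hprod := cont_coeff_prod f hfc j
    simp only [hQf, Polynomial.coeff_mul]
    exact continuous_finset_sum _ (fun x _ => continuous_const.mul (hprod x.2))
  set G : ℝ → (Fin (d+1) → ℝ) := fun η k => (Qf η).coeff k with hG
  have hGc : Continuous G := continuous_pi (fun k => hcont k)
  obtain ⟨η₀, hη₀pos, hη₀⟩ := Metric.continuousAt_iff.mp hGc.continuousAt ε hε
  obtain ⟨ρ, hρpos, hρ⟩ := Metric.continuousAt_iff.mp
    ((Polynomial.continuous R).continuousAt (x := u₀)) |R.eval u₀| (abs_pos.mpr hRu)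
  have hRval : ∀ x : ℝ, dist x u₀ < ρ → R.eval x ≠ 0 := by
    intro x hx h0
    have h := hρ hx
    rw [Real.dist_eq, h0, zero_sub, abs_neg] at h
    exact lt_irrefl _ h
  have hjpos : (0:ℝ) < j := by exact_mod_cast hj1
  set m := min η₀ (min δ ρ) with hm
  have hmpos : 0 < m := lt_min hη₀pos (lt_min hδ hρpos)
  set η := m / (2 * j) with hηdef
  have hηpos : 0 < η := div_pos hmpos (by positivity)
  have hjη : (j:ℝ) * η = m / 2 := by
    rw [hηdef]; field_simp
  have hjηm : (j:ℝ) * η < m := by rw [hjη]; linarith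
  have hiη : ∀ i : ℕ, i < j → (i:ℝ) * η < m := by
    intro i hij
    have : (i:ℝ) < j := by exact_mod_cast hij
    nlinarith
  have hj1r : (1:ℝ) ≤ j := by exact_mod_cast hj1
  have hηsmall : η < m := by nlinarith
  -- coefficient bounds
  have hdist : dist (G η) (G 0) < ε := by
    apply hη₀
    rw [Real.dist_eq, sub_zero, abs_of_pos hηpos]
    calc η < m := hηsmall
      _ ≤ η₀ := min_le_left _ _
  have hcoeffs : ∀ k : ℕ, k ≤ d → |(Qf η).coeff k - P.coeff k| < ε := by
    intro k hk
    have h := (dist_pi_lt_iff hε).mp hdist ⟨k, Nat.lt_succ_of_le hk⟩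
    simpa [hG, hQ0, Real.dist_eq] using h
  -- degree
  have hmonPr : (∏ i ∈ Finset.range j, (X - C (f i η))).Monic :=
    Polynomial.monic_prod_of_monic _ _ (fun i _ => Polynomial.monic_X_sub_C _)
  have hPrne : (∏ i ∈ Finset.range j, (X - C (f i η))) ≠ 0 := hmonPr.ne_zero
  have hPrdeg : (∏ i ∈ Finset.range j, (X - C (f i η))).natDegree = j := by
    rw [Polynomial.natDegree_prod _ _ (fun i _ => Polynomial.X_sub_C_ne_zero _)]
    simp
  have hQne : Qf η ≠ 0 := mul_ne_zero hRne hPrne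
  have hdeg : (Qf η).natDegree = d := by
    have h1 : (Qf η).natDegree = R.natDegree + j := by
      rw [hQf]; rw [Polynomial.natDegree_mul hRne hPrne, hPrdeg]
    have h2 : P.natDegree = j + R.natDegree := by
      rw [← hfac, Polynomial.natDegree_mul (pow_ne_zero _
        (Polynomial.X_sub_C_ne_zero _)) hRne, Polynomial.natDegree_pow,
        Polynomial.natDegree_X_sub_C, mul_one]
    omega
  refine ⟨Qf η, hdeg, hcoeffs, (Finset.range j).image (fun i : ℕ => u₀ + i * η), ?_, ?_⟩
  · rw [Finset.card_image_of_injOn, Finset.card_range]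
    intro a _ b _ hab
    have hab' : u₀ + (a:ℝ) * η = u₀ + (b:ℝ) * η := hab
    have : (a:ℝ) * η = b * η := by linarith
    have : (a:ℝ) = b := mul_right_cancel₀ (ne_of_gt hηpos) this
    exact_mod_cast this
  · intro r hr
    obtain ⟨i, hi, hri⟩ := Finset.mem_image.mp hr
    rw [Finset.mem_range] at hi
    have hiηpos : (0:ℝ) ≤ (i:ℝ) * η := by positivity
    have hiηm : (i:ℝ) * η < m := hiη i hi
    have hrIoo : r ∈ Set.Ioo (u₀ - δ) (u₀ + δ) := by
      constructor
      · rw [← hri] at *; linarith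
      · have : m ≤ δ := le_trans (min_le_right _ _) (min_le_left _ _)
        rw [← hri]; linarith
    have hRr : R.eval r ≠ 0 := by
      apply hRval
      rw [Real.dist_eq, ← hri]
      have : m ≤ ρ := le_trans (min_le_right _ _) (min_le_right _ _)
      rw [abs_of_nonneg (by linarith : (0:ℝ) ≤ u₀ + i * η - u₀)]
      linarith
    have hfir : f i η = r := by rw [← hri]
    -- split the product at i
    have hsplit : (∏ i' ∈ Finset.range j, (X - C (f i' η)))
        = (X - C r) * ∏ i' ∈ (Finset.range j).erase i, (X - C (f i' η)) := by
      rw [← hfir]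
      exact (Finset.mul_prod_erase (Finset.range j)
        (fun i' => X - C (f i' η)) (Finset.mem_range.mpr hi)).symm
    have hrest : (∏ i' ∈ (Finset.range j).erase i, (X - C (f i' η))).eval r ≠ 0 := by
      rw [Polynomial.eval_prod]
      rw [Finset.prod_ne_zero_iff]
      intro a ha
      have hane : a ≠ i := Finset.ne_of_mem_erase ha
      simp only [Polynomial.eval_sub, Polynomial.eval_X, Polynomial.eval_C]
      intro h0
      have : r = f a η := by linarith [h0]
      rw [← hri, hfdef] at this
      have h2 : (i:ℝ) * η = a * η := by
        simpa [hfdef] using this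
      have h3 : (i:ℝ) = a := mul_right_cancel₀ (ne_of_gt hηpos) h2
      exact hane (by exact_mod_cast h3.symm)
    have hevalr : (Qf η).eval r = 0 := by
      rw [hQf]
      simp only [Polynomial.eval_mul]
      rw [hsplit]
      simp
    have hmult : Polynomial.rootMultiplicity r (Qf η) = 1 := by
      have hrestne : (∏ i' ∈ (Finset.range j).erase i, (X - C (f i' η))) ≠ 0 :=
        fun h => hrest (by rw [h]; simp)
      have hXr : (X - C r : Polynomial ℝ) ≠ 0 := Polynomial.X_sub_C_ne_zero r
      have h1 : Qf η = R * ((X - C r) * ∏ i' ∈ (Finset.range j).erase i, (X - C (f i' η))) := by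
        show R * ∏ i' ∈ Finset.range j, (X - C (f i' η)) = _
        rw [hsplit]
      rw [h1, Polynomial.rootMultiplicity_mul
        (mul_ne_zero hRne (mul_ne_zero hXr hrestne)),
        Polynomial.rootMultiplicity_mul (mul_ne_zero hXr hrestne),
        Polynomial.rootMultiplicity_eq_zero (p := R) (fun h => hRr h),
        Polynomial.rootMultiplicity_X_sub_C_self,
        Polynomial.rootMultiplicity_eq_zero (fun h => hrest h)]
    exact ⟨hrIoo, hevalr, hmult⟩
end
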